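/- With Y as defined (Y = Y₁ ⊗ (|0⟩⟨0|+|1⟩⟨1|) + Y₂ ⊗ |2⟩⟨2| + ((1+cos²α)/cos²α)(|00⟩⟨22|+|22⟩⟨00|), Y₁ = ((1+cos²α)/cos²α)|0⟩⟨0| + (1+cos²α)|1⟩⟨1|, Y₂ = (2−sec²α)|0⟩⟨0| + (sec²α−sin²α)|1⟩⟨1| + (1+cos²α)sec²α|2⟩⟨2|), one has tr_A Y = (2 + cos²α + sec²α) I₃ for all 0 < α ≤ π/4, and hence ‖tr_A Y‖_∞ = 2 + cos²α + sec²α. -/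

import Mathlib

open Matrix Kronecker Complex ComplexOrder

noncomputable section

abbrev M3 : Type := Matrix (Fin 3) (Fin 3) ℂ
abbrev M9 : Type := Matrix (Fin 3 × Fin 3) (Fin 3 × Fin 3) ℂ

/-- |i⟩⟨j| on ℂ³ -/
def ket (i j : Fin 3) : M3 := Matrix.single i j 1

def E (α : ℝ) : M3 := (Real.sin α : ℂ) • ket 0 1 + ket 1 2
def D (α : ℝ) : M3 := (Real.cos α : ℂ) • ket 2 1 + ket 1 0

def u (α : ℝ) : Fin 3 × Fin 3 → ℂ := fun p =>
  (((if p = (1,0) then Real.sin α else 0) + (if p = (2,1) then 1 else 0)) /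
    Real.sqrt (1 + Real.sin α ^ 2) : ℝ)

def v (α : ℝ) : Fin 3 × Fin 3 → ℂ := fun p =>
  (((if p = (1,2) then Real.cos α else 0) + (if p = (0,1) then 1 else 0)) /
    Real.sqrt (1 + Real.cos α ^ 2) : ℝ)

/-- Projection onto span{|u_α⟩, |v_α⟩}, the support of the Choi matrix of N_α. -/
def Pproj (α : ℝ) : M9 :=
  vecMulVec (u α) (star (u α)) + vecMulVec (v α) (star (v α))

/-- Partial trace over the first (A) factor. -/
def trA (M : M9) : M3 := fun i j => ∑ k, M (k, i) (k, j)

/-- Partial trace over the second (B) factor. -/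
def trB (M : M9) : M3 := fun i j => ∑ k, M (i, k) (j, k)

def opNorm (M : M3) : ℝ := ‖LinearMap.toContinuousLinearMap (Matrix.toEuclideanLin M)‖

def Y1 (α : ℝ) : M3 :=
  (((1 + Real.cos α ^ 2) / Real.cos α ^ 2 : ℝ) : ℂ) • ket 0 0 +
  ((1 + Real.cos α ^ 2 : ℝ) : ℂ) • ket 1 1

def Y2 (α : ℝ) : M3 :=
  ((2 - 1 / Real.cos α ^ 2 : ℝ) : ℂ) • ket 0 0 +
  ((1 / Real.cos α ^ 2 - Real.sin α ^ 2 : ℝ) : ℂ) • ket 1 1 +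
  (((1 + Real.cos α ^ 2) / Real.cos α ^ 2 : ℝ) : ℂ) • ket 2 2

def Y3 : M9 := ket 0 2 ⊗ₖ ket 0 2 + ket 2 0 ⊗ₖ ket 2 0

def Ymat (α : ℝ) : M9 :=
  Y1 α ⊗ₖ (ket 0 0 + ket 1 1) + Y2 α ⊗ₖ ket 2 2 +
  (((1 + Real.cos α ^ 2) / Real.cos α ^ 2 : ℝ) : ℂ) • Y3

theorem lovasz_dual_partial_trace (α : ℝ) (hα : 0 < α) (hα' : α ≤ Real.pi / 4) :
    trA (Ymat α) = ((2 + Real.cos α ^ 2 + 1 / Real.cos α ^ 2 : ℝ) : ℂ) • (1 : M3) ∧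
    opNorm (trA (Ymat α)) = 2 + Real.cos α ^ 2 + 1 / Real.cos α ^ 2 := by
  have hc : Real.cos α ≠ 0 := by
    have := Real.cos_pos_of_mem_Ioo (show α ∈ Set.Ioo (-(Real.pi/2)) (Real.pi/2) from
      ⟨by linarith [Real.pi_pos], by linarith [Real.pi_pos]⟩)
    exact ne_of_gt this
  have hcC : Complex.cos (α : ℂ) ≠ 0 := by
    rw [← Complex.ofReal_cos]; exact_mod_cast hc
  have hsC : Complex.sin (α : ℂ) ^ 2 = 1 - Complex.cos (α : ℂ) ^ 2 := by
    linear_combination Complex.sin_sq_add_cos_sq (α : ℂ)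
  have h1 : trA (Ymat α) = ((2 + Real.cos α ^ 2 + 1 / Real.cos α ^ 2 : ℝ) : ℂ) • (1 : M3) := by
    ext i j
    fin_cases i <;> fin_cases j <;>
      simp [trA, Ymat, Y1, Y2, Y3, ket, Matrix.kroneckerMap_apply, Matrix.one_apply,
        Matrix.single, Fin.sum_univ_three, Prod.ext_iff] <;>
      push_cast <;> (try rw [hsC]) <;> field_simp <;> ring
  refine ⟨h1, ?_⟩
  rw [h1]
  have hpos : (0:ℝ) < 2 + Real.cos α ^ 2 + 1 / Real.cos α ^ 2 := by positivity
  obtain ⟨c, hcdef⟩ : ∃ c : ℂ, c = ((2 + Real.cos α ^ 2 + 1 / Real.cos α ^ 2 : ℝ) : ℂ) := ⟨_, rfl⟩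
  rw [← hcdef]
  have hid : Matrix.toEuclideanLin (1 : M3) = LinearMap.id := by
    apply LinearMap.ext; intro x
    simp [Matrix.toEuclideanLin_apply]
  have h2 : opNorm (c • (1 : M3)) = ‖c‖ := by
    unfold opNorm
    rw [_root_.map_smul, hid]
    rw [show LinearMap.toContinuousLinearMap
        (c • (LinearMap.id : EuclideanSpace ℂ (Fin 3) →ₗ[ℂ] EuclideanSpace ℂ (Fin 3)))
        = c • ContinuousLinearMap.id ℂ _ from rfl]
    rw [norm_smul c (ContinuousLinearMap.id ℂ (EuclideanSpace ℂ (Fin 3)))]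
    simp
  rw [h2, hcdef, Complex.norm_real, Real.norm_eq_abs, abs_of_pos hpos]
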